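/- Let $n$ be a positive integer with prime factorization $n = p_1^{\alpha_1}\cdots p_k^{\alpha_k}$ (the $p_i$ distinct primes, $\alpha_i \ge 1$). Then for every positive integer $r$, the number of cyclic subgroups of $(\mathbb{Z}/n\mathbb{Z})^r$ equals $$\frac{1}{\varphi(n)} \prod_{i=1}^k \ \sum_{\substack{1 \le m_i \le p_i^{\alpha_i} \\ p_i \nmid m_i}} \gcd(m_i - 1, p_i^{\alpha_i})^r.$$ -/

import Mathlib

open AddSubgroup MulAction Function

section Helpers

variable {n : ℕ} [NeZero n]

private lemma castHomZero_iff {d : ℕ} (hd : d ∣ n) (z : ZMod n) :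
    ZMod.castHom hd (ZMod d) z = 0 ↔ d ∣ z.val := by
  conv_lhs => rw [← ZMod.natCast_rightInverse z]
  rw [map_natCast]
  exact ZMod.natCast_eq_zero_iff _ _

private lemma smul_zero_iff_dvd {M : Type*} [AddCommGroup M] [Module (ZMod n) M]
    (x : M) (c : ZMod n) : c • x = 0 ↔ addOrderOf x ∣ c.val := by
  conv_lhs => rw [← ZMod.natCast_rightInverse c, Nat.cast_smul_eq_nsmul]
  exact addOrderOf_dvd_iff_nsmul_eq_zero.symm

private lemma mem_zmultiples_natCast_iff {d : ℕ} (hd : d ∣ n) (x : ZMod n) :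
    x ∈ zmultiples ((d : ℕ) : ZMod n) ↔ d ∣ x.val := by
  constructor
  · rintro ⟨k, rfl⟩
    rw [← castHomZero_iff hd, map_zsmul, map_natCast, ZMod.natCast_self, smul_zero]
  · rintro ⟨t, ht⟩
    refine ⟨(t : ℤ), ?_⟩
    have hx : x = ((d * t : ℕ) : ZMod n) := by rw [← ht, ZMod.natCast_rightInverse x]
    show ((t : ℤ) • ((d : ℕ) : ZMod n)) = x
    rw [hx, zsmul_eq_mul]
    push_cast
    ring

private lemma card_ker (a : ZMod n) :
    Nat.card {x : ZMod n // a * x = 0} = Nat.gcd a.val n := by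
  have hn0 : n ≠ 0 := NeZero.ne n
  set d := addOrderOf a with hdd
  have hda : d = n / n.gcd a.val := by
    rw [hdd, ← ZMod.addOrderOf_coe a.val hn0, ZMod.natCast_rightInverse a]
  have hdn : d ∣ n := addOrderOf_dvd_of_nsmul_eq_zero (by
    simp [nsmul_eq_mul, ZMod.natCast_self])
  have key : ∀ x : ZMod n, a * x = 0 ↔ d ∣ x.val := by
    intro x
    rw [mul_comm, ← smul_eq_mul]
    exact smul_zero_iff_dvd a x
  have hset : ∀ x : ZMod n, a * x = 0 ↔ x ∈ zmultiples ((d : ℕ) : ZMod n) := by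
    intro x; rw [key, mem_zmultiples_natCast_iff hdn]
  calc Nat.card {x : ZMod n // a * x = 0}
      = Nat.card (zmultiples ((d : ℕ) : ZMod n)) :=
        Nat.card_congr (Equiv.subtypeEquiv (Equiv.refl _) (fun x => by simpa using hset x))
    _ = addOrderOf ((d : ℕ) : ZMod n) := Nat.card_zmultiples _
    _ = n / n.gcd d := ZMod.addOrderOf_coe d hn0
    _ = n / d := by rw [Nat.gcd_eq_right hdn]
    _ = Nat.gcd a.val n := by
        rw [hda, Nat.div_div_self (Nat.gcd_dvd_left n a.val) hn0, Nat.gcd_comm]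

end Helpers
section Orbits

variable {n : ℕ} [NeZero n] {r : ℕ}

private lemma smul_mem_zmultiples (x : Fin r → ZMod n) (c : ZMod n) :
    c • x ∈ zmultiples x := by
  have : c • x = c.val • x := by
    conv_lhs => rw [← ZMod.natCast_rightInverse c, Nat.cast_smul_eq_nsmul]
  rw [this]
  exact nsmul_mem (mem_zmultiples x) c.val

private lemma isAddCyclic_zmultiples (x : Fin r → ZMod n) :
    IsAddCyclic (zmultiples x) := by
  refine ⟨⟨x, mem_zmultiples x⟩, ?_⟩
  rintro ⟨y, k, hk⟩
  exact ⟨k, Subtype.ext (by simpa using hk)⟩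

private lemma orderOf_dvd_n (y : Fin r → ZMod n) : addOrderOf y ∣ n := by
  refine addOrderOf_dvd_of_nsmul_eq_zero ?_
  funext i
  simp [nsmul_eq_mul, ZMod.natCast_self]

private lemma exists_unit_smul {x y : Fin r → ZMod n}
    (h : zmultiples x = zmultiples y) : ∃ u : (ZMod n)ˣ, u • y = x := by
  have hyx : x ∈ zmultiples y := h ▸ mem_zmultiples x
  have hxy : y ∈ zmultiples x := by rw [h]; exact mem_zmultiples y
  obtain ⟨a, ha⟩ := hyx
  obtain ⟨b, hb⟩ := hxy
  set A : ZMod n := ((a : ℤ) : ZMod n) with hA'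
  set B : ZMod n := ((b : ℤ) : ZMod n) with hB'
  have hA : A • y = x := by rw [hA', Int.cast_smul_eq_zsmul]; exact ha
  have hB : B • x = y := by rw [hB', Int.cast_smul_eq_zsmul]; exact hb
  have hC : (B * A) • y = y := by rw [mul_smul, hA, hB]
  have h1 : (B * A - 1) • y = 0 := by rw [sub_smul, one_smul, hC, sub_self]
  set d := addOrderOf y with hd'
  have hdn : d ∣ n := orderOf_dvd_n y
  have hd1 : d ∣ (B * A - 1).val := (smul_zero_iff_dvd y _).mp h1
  set φ := ZMod.castHom hdn (ZMod d) with hφ'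
  have hφC : φ (B * A - 1) = 0 := (castHomZero_iff hdn _).mpr hd1
  have hunit : IsUnit (φ A) := by
    refine IsUnit.of_mul_eq_one (φ B) ?_
    rw [map_sub, map_one, sub_eq_zero, map_mul] at hφC
    rw [mul_comm]; exact hφC
  obtain ⟨u, hu⟩ := ZMod.unitsMap_surjective hdn hunit.unit
  have hφu : φ (↑u) = φ A := by
    have h2 := congrArg Units.val hu
    simpa [ZMod.unitsMap_def, hφ', ZMod.castHom_apply] using h2
  have h3 : ((↑u : ZMod n) - A) • y = 0 := by
    refine (smul_zero_iff_dvd y _).mpr ?_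
    rw [← castHomZero_iff hdn, map_sub, hφu, sub_self]
  refine ⟨u, ?_⟩
  rw [Units.smul_def]
  rw [sub_smul, sub_eq_zero] at h3
  rw [h3, hA]

private lemma card_orbits_eq :
    Nat.card (Quotient (orbitRel (ZMod n)ˣ (Fin r → ZMod n)))
      = Nat.card {H : AddSubgroup (Fin r → ZMod n) // IsAddCyclic H} := by
  refine Nat.card_congr (Equiv.ofBijective
    (Quotient.lift (fun x => (⟨zmultiples x, _root_.isAddCyclic_zmultiples x⟩ :
      {H : AddSubgroup (Fin r → ZMod n) // IsAddCyclic H})) ?_) ⟨?_, ?_⟩)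
  · intro x y hxy
    obtain ⟨u, hu⟩ := hxy
    change u • y = x at hu
    ext1
    dsimp only
    have hmxy : x ∈ zmultiples y := by
      rw [← hu, Units.smul_def]; exact smul_mem_zmultiples y _
    have hmyx : y ∈ zmultiples x := by
      rw [← hu, Units.smul_def]
      have : y = (↑u⁻¹ : ZMod n) • ((↑u : ZMod n) • y) := by
        rw [smul_smul, ← Units.val_mul, inv_mul_cancel, Units.val_one, one_smul]
      have h2 := smul_mem_zmultiples ((↑u : ZMod n) • y) (↑u⁻¹ : ZMod n)
      rwa [← this] at h2
    exact le_antisymm (zmultiples_le.mpr hmxy) (zmultiples_le.mpr hmyx)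
  · intro ω₁ ω₂
    induction ω₁ using Quotient.ind with | _ x => ?_
    induction ω₂ using Quotient.ind with | _ y => ?_
    intro hf
    have h : zmultiples x = zmultiples y := congrArg Subtype.val hf
    obtain ⟨u, hu⟩ := exists_unit_smul h
    exact Quotient.sound ⟨u, hu⟩
  · rintro ⟨H, hH⟩
    obtain ⟨g, hg⟩ := @IsAddCyclic.exists_generator H _ hH
    refine ⟨Quotient.mk (orbitRel (ZMod n)ˣ (Fin r → ZMod n)) (g : Fin r → ZMod n), ?_⟩
    ext1
    dsimp only
    refine le_antisymm (zmultiples_le.mpr g.2) ?_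
    intro h hh
    obtain ⟨k, hk⟩ := hg ⟨h, hh⟩
    exact ⟨k, by simpa using congrArg Subtype.val hk⟩

end Orbits
section Pieces

private def unitsPiEquiv {ι : Type*} (R : ι → Type*) [∀ i, Monoid (R i)] :
    (Π i, R i)ˣ ≃ Π i, (R i)ˣ where
  toFun u i := ⟨u.val i, u.inv i, congrFun u.val_inv i, congrFun u.inv_val i⟩
  invFun w := ⟨fun i => w i, fun i => ↑((w i)⁻¹), by funext i; simp, by funext i; simp⟩
  left_inv u := Units.ext rfl
  right_inv w := by funext i; exact Units.ext rfl

private lemma gcd_finset_prod {ι : Type*} (a : ℕ) (s : Finset ι) (q : ι → ℕ)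
    (h : Set.Pairwise ↑s (Nat.Coprime on q)) :
    Nat.gcd a (∏ i ∈ s, q i) = ∏ i ∈ s, Nat.gcd a (q i) := by
  classical
  induction s using Finset.induction_on with
  | empty => simp
  | @insert j s hj ih =>
    rw [Finset.prod_insert hj, Finset.prod_insert hj]
    have hcop : Nat.Coprime (q j) (∏ i ∈ s, q i) :=
      Nat.Coprime.prod_right fun i hi => h (Finset.mem_insert_self j s)
        (Finset.mem_insert_of_mem hi) (fun hji => hj (hji ▸ hi))
    rw [Nat.Coprime.gcd_mul a hcop,
      ih (h.mono (Finset.coe_subset.mpr (Finset.subset_insert j s)))]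

private lemma card_fixedBy {n r : ℕ} [NeZero n] (u : (ZMod n)ˣ) :
    Nat.card (fixedBy (Fin r → ZMod n) u) = Nat.gcd ((↑u - 1 : ZMod n)).val n ^ r := by
  have key : ∀ x : Fin r → ZMod n,
      u • x = x ↔ ∀ i, ((↑u : ZMod n) - 1) * x i = 0 := by
    intro x
    rw [Units.smul_def]
    constructor
    · intro hx i
      have h1 := congrFun hx i
      rw [Pi.smul_apply, smul_eq_mul] at h1
      rw [sub_mul, one_mul, sub_eq_zero]
      exact h1
    · intro hx
      funext i
      have h1 := hx i
      rw [sub_mul, one_mul, sub_eq_zero] at h1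
      rw [Pi.smul_apply, smul_eq_mul]
      exact h1
  have hequiv : (fixedBy (Fin r → ZMod n) u) ≃
      (Fin r → {c : ZMod n // ((↑u : ZMod n) - 1) * c = 0}) :=
    { toFun := fun x i => ⟨x.1 i, (key x.1).mp x.2 i⟩
      invFun := fun y => ⟨fun i => (y i).1, (key _).mpr fun i => (y i).2⟩
      left_inv := fun x => rfl
      right_inv := fun y => rfl }
  rw [Nat.card_congr hequiv, Nat.card_fun, card_ker,
    Nat.card_eq_fintype_card (α := Fin r), Fintype.card_fin]

private lemma sum_units_gcd_eq {P β : ℕ} [NeZero (P ^ β)] (hP : P.Prime) (hβ : 1 ≤ β) (r : ℕ) :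
    ∑ w : (ZMod (P ^ β))ˣ, Nat.gcd ((↑w - 1 : ZMod (P ^ β))).val (P ^ β) ^ r
      = ∑ x ∈ (Finset.Icc 1 (P ^ β)).filter (fun x => ¬ P ∣ x),
          Nat.gcd (x - 1) (P ^ β) ^ r := by
  have hq1 : 1 < P ^ β := Nat.one_lt_pow (by omega) hP.one_lt
  haveI : Fact (1 < P ^ β) := ⟨hq1⟩
  have hPq : P ∣ P ^ β := dvd_pow_self P (by omega)
  have hval : ∀ w : (ZMod (P ^ β))ˣ, 1 ≤ (↑w : ZMod (P ^ β)).val := by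
    intro w
    rcases Nat.eq_zero_or_pos (↑w : ZMod (P ^ β)).val with h0 | h1
    · exfalso
      have : (↑w : ZMod (P ^ β)) = 0 := by
        rwa [ZMod.val_eq_zero] at h0
      exact w.ne_zero this
    · exact h1
  have hmem : ∀ w : (ZMod (P ^ β))ˣ, (↑w : ZMod (P ^ β)).val ∈
      (Finset.Icc 1 (P ^ β)).filter (fun x => ¬ P ∣ x) := by
    intro w
    rw [Finset.mem_filter, Finset.mem_Icc]
    refine ⟨⟨hval w, le_of_lt (ZMod.val_lt _)⟩, ?_⟩
    intro hdvd
    have hcop := ZMod.val_coe_unit_coprime w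
    have : P ∣ 1 := hcop ▸ Nat.dvd_gcd hdvd hPq
    have hp1 : P = 1 := Nat.dvd_one.mp this
    have := hP.one_lt
    omega
  have hcop : ∀ x ∈ (Finset.Icc 1 (P ^ β)).filter (fun x => ¬ P ∣ x),
      Nat.Coprime x (P ^ β) := by
    intro x hx
    rw [Finset.mem_filter] at hx
    exact (((hP.coprime_iff_not_dvd).mpr hx.2).symm).pow_right β
  refine Finset.sum_bij' (fun w _ => (↑w : ZMod (P ^ β)).val)
    (fun x hx => ZMod.unitOfCoprime x (hcop x hx))
    (fun w _ => hmem w) (fun x hx => Finset.mem_univ _)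
    (fun w hw => ?_) (fun x hx => ?_) (fun w hw => ?_)
  · exact Units.ext (by rw [ZMod.coe_unitOfCoprime]; exact ZMod.natCast_rightInverse _)
  · have hx' := hx
    rw [Finset.mem_filter, Finset.mem_Icc] at hx'
    have hlt : x < P ^ β := lt_of_le_of_ne hx'.1.2 (fun he => hx'.2 (he ▸ hPq))
    show (↑(ZMod.unitOfCoprime x (hcop x hx)) : ZMod (P ^ β)).val = x
    rw [ZMod.coe_unitOfCoprime, ZMod.val_natCast, Nat.mod_eq_of_lt hlt]
  · have e1 : (((↑w : ZMod (P ^ β)).val - 1 : ℕ) : ZMod (P ^ β))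
        = (↑w : ZMod (P ^ β)) - 1 := by
      rw [Nat.cast_sub (hval w), Nat.cast_one,
        ZMod.natCast_rightInverse (↑w : ZMod (P ^ β))]
    rw [← e1, ZMod.val_natCast,
      Nat.mod_eq_of_lt (lt_of_le_of_lt (Nat.sub_le _ _) (ZMod.val_lt _))]

end Pieces
section CRT

set_option maxHeartbeats 2000000 in
private lemma crt_step {k : ℕ} (p : Fin k → ℕ) (α : Fin k → ℕ) (hp : ∀ i, (p i).Prime)
    (hinj : Function.Injective p) (hα : ∀ i, 1 ≤ α i) (r : ℕ)
    [NeZero (∏ i, p i ^ α i)] :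
    ∑ u : (ZMod (∏ i, p i ^ α i))ˣ,
        Nat.gcd ((↑u - 1 : ZMod (∏ i, p i ^ α i))).val (∏ i, p i ^ α i) ^ r
      = ∏ i, ∑ x ∈ (Finset.Icc 1 (p i ^ α i)).filter (fun x => ¬ p i ∣ x),
          Nat.gcd (x - 1) (p i ^ α i) ^ r := by
  classical
  haveI inst : ∀ i, NeZero (p i ^ α i) := fun i =>
    ⟨pow_ne_zero _ (hp i).pos.ne'⟩
  have hpair : Pairwise (Nat.Coprime on fun i => p i ^ α i) := by
    intro i j hij
    show Nat.Coprime (p i ^ α i) (p j ^ α j)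
    exact Nat.Coprime.pow _ _ ((Nat.coprime_primes (hp i) (hp j)).mpr (fun h => hij (hinj h)))
  set e := ZMod.prodEquivPi (fun i => p i ^ α i) hpair with he
  let Φ : (ZMod (∏ i, p i ^ α i))ˣ ≃ Π i, (ZMod (p i ^ α i))ˣ :=
    (Units.mapEquiv e.toMulEquiv).toEquiv.trans (unitsPiEquiv _)
  have hterm : ∀ u : (ZMod (∏ i, p i ^ α i))ˣ,
      Nat.gcd ((↑u - 1 : ZMod (∏ i, p i ^ α i))).val (∏ i, p i ^ α i) ^ r
        = ∏ i, Nat.gcd ((↑(Φ u i) - 1 : ZMod (p i ^ α i))).val (p i ^ α i) ^ r := by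
    intro u
    set c : ZMod (∏ i, p i ^ α i) := ↑u - 1 with hc
    have hcomp : ∀ i, (↑(Φ u i) - 1 : ZMod (p i ^ α i)) = ((c.val : ℕ) : ZMod (p i ^ α i)) := by
      intro i
      have h1 : (↑(Φ u i) : ZMod (p i ^ α i)) = e ↑u i := rfl
      have h2 : e ↑u i - 1 = e c i := by
        rw [hc, map_sub, map_one]
        simp
      have h3 : e c = ((c.val : ℕ) : Π i, ZMod (p i ^ α i)) := by
        conv_lhs => rw [← ZMod.natCast_rightInverse c]
        rw [map_natCast]
      rw [h1, h2, h3]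
      rfl
    have hval : ∀ i, ((↑(Φ u i) - 1 : ZMod (p i ^ α i))).val = c.val % p i ^ α i := by
      intro i
      rw [hcomp i, ZMod.val_natCast]
    have hgcd : ∀ i, Nat.gcd ((↑(Φ u i) - 1 : ZMod (p i ^ α i))).val (p i ^ α i)
        = Nat.gcd c.val (p i ^ α i) := by
      intro i
      rw [hval i, ← Nat.gcd_rec, Nat.gcd_comm]
    have hfac : Nat.gcd c.val (∏ i, p i ^ α i) = ∏ i, Nat.gcd c.val (p i ^ α i) :=
      gcd_finset_prod c.val Finset.univ _ (hpair.set_pairwise _)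
    calc Nat.gcd c.val (∏ i, p i ^ α i) ^ r
        = (∏ i, Nat.gcd c.val (p i ^ α i)) ^ r := by rw [hfac]
      _ = ∏ i, Nat.gcd c.val (p i ^ α i) ^ r := by rw [Finset.prod_pow]
      _ = ∏ i, Nat.gcd ((↑(Φ u i) - 1 : ZMod (p i ^ α i))).val (p i ^ α i) ^ r := by
          exact Finset.prod_congr rfl fun i _ => by rw [hgcd i]
  calc ∑ u : (ZMod (∏ i, p i ^ α i))ˣ,
        Nat.gcd ((↑u - 1 : ZMod (∏ i, p i ^ α i))).val (∏ i, p i ^ α i) ^ r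
      = ∑ u : (ZMod (∏ i, p i ^ α i))ˣ,
          ∏ i, Nat.gcd ((↑(Φ u i) - 1 : ZMod (p i ^ α i))).val (p i ^ α i) ^ r :=
        Finset.sum_congr rfl fun u _ => hterm u
    _ = ∑ w : Π i, (ZMod (p i ^ α i))ˣ,
          ∏ i, Nat.gcd ((↑(w i) - 1 : ZMod (p i ^ α i))).val (p i ^ α i) ^ r :=
        Equiv.sum_comp Φ (fun w => ∏ i, Nat.gcd ((↑(w i) - 1 : ZMod (p i ^ α i))).val (p i ^ α i) ^ r)
    _ = ∏ i, ∑ w : (ZMod (p i ^ α i))ˣ,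
          Nat.gcd ((↑w - 1 : ZMod (p i ^ α i))).val (p i ^ α i) ^ r := by
        rw [Finset.prod_univ_sum]
        rw [Fintype.piFinset_univ]
    _ = ∏ i, ∑ x ∈ (Finset.Icc 1 (p i ^ α i)).filter (fun x => ¬ p i ∣ x),
          Nat.gcd (x - 1) (p i ^ α i) ^ r :=
        Finset.prod_congr rfl fun i _ => sum_units_gcd_eq (hp i) (hα i) r

end CRT
/-- Corollary 3: for `n = ∏ pᵢ^{αᵢ}` and any `r ≥ 1`, the number of cyclic subgroups of
`(ZMod n)^r` equals `(1/φ(n)) ∏ᵢ ∑_{1 ≤ mᵢ ≤ pᵢ^{αᵢ}, pᵢ ∤ mᵢ} gcd(mᵢ-1, pᵢ^{αᵢ})^r`,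
stated multiplicatively to avoid division. -/
theorem stmt2 (n : ℕ) (hn : 0 < n) (k : ℕ) (p : Fin k → ℕ) (hp : ∀ i, (p i).Prime)
    (hinj : Function.Injective p) (α : Fin k → ℕ) (hα : ∀ i, 1 ≤ α i)
    (hfac : n = ∏ i, p i ^ α i) (r : ℕ) (hr : 0 < r) :
    Nat.totient n * Nat.card {H : AddSubgroup (Fin r → ZMod n) // IsAddCyclic H}
      = ∏ i, ∑ x ∈ (Finset.Icc 1 (p i ^ α i)).filter (fun x => ¬ p i ∣ x),
          Nat.gcd (x - 1) (p i ^ α i) ^ r := by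
  classical
  subst hfac
  haveI : NeZero (∏ i, p i ^ α i) := ⟨hn.ne'⟩
  letI : ∀ a : (ZMod (∏ i, p i ^ α i))ˣ,
      Fintype (fixedBy (Fin r → ZMod (∏ i, p i ^ α i)) a) := fun a => Fintype.ofFinite _
  letI : Fintype (Quotient (orbitRel (ZMod (∏ i, p i ^ α i))ˣ
      (Fin r → ZMod (∏ i, p i ^ α i)))) := Fintype.ofFinite _
  have hb := MulAction.sum_card_fixedBy_eq_card_orbits_mul_card_group
    (ZMod (∏ i, p i ^ α i))ˣ (Fin r → ZMod (∏ i, p i ^ α i))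
  have hcount : Nat.totient (∏ i, p i ^ α i) *
      Nat.card {H : AddSubgroup (Fin r → ZMod (∏ i, p i ^ α i)) // IsAddCyclic H}
      = ∑ u : (ZMod (∏ i, p i ^ α i))ˣ,
          Nat.gcd ((↑u - 1 : ZMod (∏ i, p i ^ α i))).val (∏ i, p i ^ α i) ^ r := by
    rw [← card_orbits_eq, Nat.card_eq_fintype_card,
      ← ZMod.card_units_eq_totient (∏ i, p i ^ α i), Nat.mul_comm, ← hb]
    exact Finset.sum_congr rfl fun u _ => by
      rw [← Nat.card_eq_fintype_card]; exact card_fixedBy u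
  rw [hcount]
  exact crt_step p α hp hinj hα r
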